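/- Let the Markov operator cocycle (P,σ) be induced by Perron–Frobenius operators of non-singular transformations T_ω: X → X (P_ω = L_{T_ω}). Then (P,σ) is exact if and only if for ℙ-a.e. ω ∈ Ω the tail σ-field ⋂_{n≥1} (T_ω^n)^{-1}𝒜 is trivial mod m (equals {∅, X} up to m-null sets), where T_ω^n = T_{σ^{n−1}ω} ∘ ⋯ ∘ T_ω. -/

import Mathlib

set_option linter.unusedSectionVars false
set_option linter.unusedVariables false
set_option maxHeartbeats 1000000
open scoped ENNReal


open MeasureTheory Filter Topology

/-- The cocycle `P_ω^{(n)} = P_{σ^{n-1}ω} ∘ ⋯ ∘ P_ω` generated by a family of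
operators over the driving system `σ`. -/
noncomputable def coc {Ω M : Type*} [Monoid M] (P : Ω → M) (σ : Ω → Ω) : ℕ → Ω → M
  | 0, _ => 1
  | n + 1, ω => P (σ^[n] ω) * coc P σ n ω

/-- The cocycle `T_ω^n = T_{σ^{n-1}ω} ∘ ⋯ ∘ T_ω` of maps on `X`. -/
noncomputable def mapCoc {Ω X : Type*} (T : Ω → X → X) (σ : Ω → Ω) : ℕ → Ω → X → X
  | 0, _ => id
  | n + 1, ω => T (σ^[n] ω) ∘ mapCoc T σ n ω

section Aux

variable {X : Type*} [MeasurableSpace X] {m : Measure X}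
variable {Ω : Type*} {σ : Ω → Ω} {T : Ω → X → X}

lemma mapCoc_meas (hT : ∀ ω, Measurable (T ω)) (n : ℕ) (ω : Ω) :
    Measurable (mapCoc T σ n ω) := by
  induction n with
  | zero => exact measurable_id
  | succ n ih => exact (hT _).comp ih

lemma mapCoc_qmp (hT : ∀ ω, Measurable (T ω)) (hns : ∀ ω, Measure.map (T ω) m ≪ m)
    (n : ℕ) (ω : Ω) : Measure.QuasiMeasurePreserving (mapCoc T σ n ω) m m := by
  induction n with
  | zero => exact Measure.QuasiMeasurePreserving.id m
  | succ n ih =>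
    refine ⟨mapCoc_meas hT (n+1) ω, ?_⟩
    show Measure.map (T (σ^[n] ω) ∘ mapCoc T σ n ω) m ≪ m
    rw [← Measure.map_map (hT _) (mapCoc_meas hT n ω)]
    exact (ih.2.map (hT _)).trans (hns _)

lemma mapCoc_add (n k : ℕ) (ω : Ω) :
    mapCoc T σ (n + k) ω = mapCoc T σ n (σ^[k] ω) ∘ mapCoc T σ k ω := by
  induction n with
  | zero => simp [mapCoc]
  | succ n ih =>
    have h : n + 1 + k = (n + k) + 1 := by omega
    rw [h]
    show T (σ^[n + k] ω) ∘ mapCoc T σ (n + k) ω = _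
    rw [ih, Function.iterate_add_apply]
    rfl

lemma memℒp_top_comp {u : X → X} (hu : Measure.QuasiMeasurePreserving u m m)
    (g : Lp ℝ ⊤ m) : MemLp ((g : X → ℝ) ∘ u) ⊤ m := by
  refine ⟨(Lp.aestronglyMeasurable g).comp_quasiMeasurePreserving hu, ?_⟩
  rw [eLpNorm_exponent_top]
  have hfin : eLpNormEssSup (g : X → ℝ) m ≠ ⊤ := by
    have := Lp.eLpNorm_lt_top g
    rw [eLpNorm_exponent_top] at this
    exact this.ne
  have h1 : ∀ᵐ x ∂m, ‖(g : X → ℝ) x‖₊ ≤ (eLpNormEssSup (g : X → ℝ) m).toNNReal := by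
    filter_upwards [ae_le_eLpNormEssSup (f := (g : X → ℝ)) (μ := m)] with x hx
    rwa [← ENNReal.coe_le_coe, ENNReal.coe_toNNReal hfin]
  have h2 : ∀ᵐ x ∂m, ‖((g : X → ℝ) ∘ u) x‖₊ ≤ (eLpNormEssSup (g : X → ℝ) m).toNNReal :=
    hu.ae h1
  exact (eLpNormEssSup_le_of_ae_nnnorm_bound h2).trans_lt ENNReal.coe_lt_top


lemma key_int (hT : ∀ ω, Measurable (T ω)) (hns : ∀ ω, Measure.map (T ω) m ≪ m)
    (P : Ω → Module.End ℝ (Lp ℝ 1 m))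
    (hPF : ∀ (ω : Ω) (f : Lp ℝ 1 m) (g : Lp ℝ ⊤ m),
      ∫ x, (P ω f) x * g x ∂m = ∫ x, f x * g (T ω x) ∂m)
    (n : ℕ) (ω : Ω) (f : Lp ℝ 1 m) (g : Lp ℝ ⊤ m) :
    ∫ x, (coc P σ n ω f) x * g x ∂m = ∫ x, f x * g (mapCoc T σ n ω x) ∂m := by
  induction n generalizing g with
  | zero =>
    show ∫ x, ((1 : Module.End ℝ (Lp ℝ 1 m)) f) x * g x ∂m = _
    rw [Module.End.one_apply]
    rfl
  | succ n ih =>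
    have hu : Measure.QuasiMeasurePreserving (T (σ^[n] ω)) m m := ⟨hT _, hns _⟩
    set g' : Lp ℝ ⊤ m := (memℒp_top_comp hu g).toLp _ with hg'def
    have hae : (g' : X → ℝ) =ᵐ[m] (g : X → ℝ) ∘ (T (σ^[n] ω)) := MemLp.coeFn_toLp _
    have step1 : ∫ x, (coc P σ (n+1) ω f) x * g x ∂m
        = ∫ x, (coc P σ n ω f) x * g (T (σ^[n] ω) x) ∂m := by
      show ∫ x, ((P (σ^[n] ω) * coc P σ n ω) f) x * g x ∂m = _
      rw [Module.End.mul_apply]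
      exact hPF _ _ _
    have step2 : ∫ x, (coc P σ n ω f) x * g (T (σ^[n] ω) x) ∂m
        = ∫ x, (coc P σ n ω f) x * g' x ∂m := by
      refine integral_congr_ae ?_
      filter_upwards [hae] with x hx
      rw [hx]; rfl
    have step3 := ih g'
    have step4 : ∫ x, f x * g' (mapCoc T σ n ω x) ∂m
        = ∫ x, f x * g (mapCoc T σ (n+1) ω x) ∂m := by
      refine integral_congr_ae ?_
      have := (mapCoc_qmp (σ := σ) hT hns n ω).ae_eq_comp hae
      filter_upwards [this] with x hx
      have : g' (mapCoc T σ n ω x) = g (T (σ^[n] ω) (mapCoc T σ n ω x)) := hx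
      rw [this]
      rfl
    rw [step1, step2, step3, step4]

lemma P_norm_le (P : Ω → Module.End ℝ (Lp ℝ 1 m))
    (hP : ∀ ω, (∀ f : Lp ℝ 1 m, 0 ≤ f → 0 ≤ P ω f) ∧
      ∀ f : Lp ℝ 1 m, ∫ x, (P ω f) x ∂m = ∫ x, f x ∂m)
    (ω : Ω) (f : Lp ℝ 1 m) : ‖P ω f‖ ≤ ‖f‖ := by
  have h1 : P ω f ≤ P ω |f| := by
    have := (hP ω).1 (|f| - f) (sub_nonneg.mpr (le_sup_left : f ≤ f ⊔ -f))
    rw [map_sub] at this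
    exact sub_nonneg.mp this
  have h2 : -(P ω f) ≤ P ω |f| := by
    have := (hP ω).1 (|f| + f)
      (neg_le_iff_add_nonneg.mp (le_sup_right : -f ≤ f ⊔ -f))
    rw [map_add] at this
    exact neg_le_iff_add_nonneg.mpr this
  have habs : |P ω f| ≤ P ω |f| := sup_le h1 h2
  have hmono : ∀ᵐ x ∂m, ‖(P ω f : X → ℝ) x‖ ≤ (P ω |f| : X → ℝ) x := by
    filter_upwards [(Lp.coeFn_le _ _).mpr habs, Lp.coeFn_abs (P ω f)] with x h1x h2x
    rw [Real.norm_eq_abs, ← h2x]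
    exact h1x
  calc ‖P ω f‖ = ∫ x, ‖(P ω f : X → ℝ) x‖ ∂m := L1.norm_eq_integral_norm _
    _ ≤ ∫ x, (P ω |f| : X → ℝ) x ∂m :=
        integral_mono_ae (L1.integrable_coeFn _).norm (L1.integrable_coeFn _) hmono
    _ = ∫ x, (|f| : Lp ℝ 1 m) x ∂m := (hP ω).2 |f|
    _ = ∫ x, ‖(f : X → ℝ) x‖ ∂m := by
        refine integral_congr_ae ?_
        filter_upwards [Lp.coeFn_abs f] with x hx
        rw [hx, Real.norm_eq_abs]
    _ = ‖f‖ := (L1.norm_eq_integral_norm f).symm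

lemma coc_norm_le (P : Ω → Module.End ℝ (Lp ℝ 1 m))
    (hP : ∀ ω, (∀ f : Lp ℝ 1 m, 0 ≤ f → 0 ≤ P ω f) ∧
      ∀ f : Lp ℝ 1 m, ∫ x, (P ω f) x ∂m = ∫ x, f x ∂m)
    (n : ℕ) (ω : Ω) (f : Lp ℝ 1 m) : ‖coc P σ n ω f‖ ≤ ‖f‖ := by
  induction n with
  | zero =>
    show ‖(1 : Module.End ℝ (Lp ℝ 1 m)) f‖ ≤ ‖f‖
    rw [Module.End.one_apply]
  | succ n ih =>
    show ‖(P (σ^[n] ω) * coc P σ n ω) f‖ ≤ ‖f‖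
    rw [Module.End.mul_apply]
    exact (P_norm_le P hP _ _).trans ih

end Aux

section Hilbert

open scoped RealInnerProductSpace

variable {E : Type*} [NormedAddCommGroup E] [InnerProductSpace ℝ E]

/-- Orthogonal projection onto a complete subspace, as a bare function. -/
noncomputable def projC (K : Submodule ℝ E) (hc : IsComplete (K : Set E)) : E → E :=
  haveI : CompleteSpace K := hc.completeSpace_coe
  fun f => (K.orthogonalProjectionOnto f : E)

lemma projC_mem (K : Submodule ℝ E) (hc : IsComplete (K : Set E)) (f : E) :
    projC K hc f ∈ K := by
  haveI : CompleteSpace K := hc.completeSpace_coe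
  exact (K.orthogonalProjectionOnto f).2

lemma sub_projC_mem (K : Submodule ℝ E) (hc : IsComplete (K : Set E)) (f : E) :
    f - projC K hc f ∈ Kᗮ := by
  haveI : CompleteSpace K := hc.completeSpace_coe
  exact K.sub_starProjection_mem_orthogonal f

lemma inner_projC (K : Submodule ℝ E) (hc : IsComplete (K : Set E)) (f k : E) (hk : k ∈ K) :
    ⟪projC K hc f, k⟫ = ⟪f, k⟫ := by
  have h0 : ⟪k, f - projC K hc f⟫ = 0 :=
    (Submodule.mem_orthogonal _ _).mp (sub_projC_mem K hc f) k hk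
  have h1 : ⟪f - projC K hc f, k⟫ = 0 := by rw [real_inner_comm]; exact h0
  rw [inner_sub_left] at h1
  linarith

lemma projC_projC {K K' : Submodule ℝ E} (hc : IsComplete (K : Set E))
    (hc' : IsComplete (K' : Set E)) (h : K' ≤ K) (f : E) :
    projC K' hc' (projC K hc f) = projC K' hc' f := by
  set a := projC K hc f
  set b := projC K' hc' a
  set c := projC K' hc' f
  have hbc : b - c ∈ K' := K'.sub_mem (projC_mem _ _ _) (projC_mem _ _ _)
  have hbc' : b - c ∈ K'ᗮ := by
    have h1 : f - c ∈ K'ᗮ := sub_projC_mem _ _ _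
    have h2 : a - b ∈ K'ᗮ := sub_projC_mem _ _ _
    have h3 : f - a ∈ K'ᗮ := Submodule.orthogonal_le h (sub_projC_mem _ _ _)
    have : b - c = (f - c) - (f - a) - (a - b) := by abel
    rw [this]
    exact Submodule.sub_mem _ (Submodule.sub_mem _ h1 h3) h2
  have : ⟪b - c, b - c⟫ = 0 := (Submodule.mem_orthogonal _ _).mp hbc' _ hbc
  have : b - c = 0 := by rwa [inner_self_eq_zero] at this
  exact sub_eq_zero.mp this

lemma projC_pyth {K K' : Submodule ℝ E} (hc : IsComplete (K : Set E))
    (hc' : IsComplete (K' : Set E)) (h : K' ≤ K) (f : E) :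
    ‖projC K hc f‖ ^ 2 = ‖projC K' hc' f‖ ^ 2 + ‖projC K hc f - projC K' hc' f‖ ^ 2 := by
  set a := projC K hc f
  set c := projC K' hc' f
  have hca : c = projC K' hc' a := (projC_projC hc hc' h f).symm
  have horth : ⟪c, a - c⟫ = 0 := by
    have hmem : a - c ∈ K'ᗮ := by rw [hca]; exact sub_projC_mem _ _ _
    exact ((Submodule.mem_orthogonal _ _).mp hmem _ (projC_mem _ _ _))
  have hexp : ‖a‖ ^ 2 = ‖c‖ ^ 2 + 2 * ⟪c, a - c⟫ + ‖a - c‖ ^ 2 := by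
    have hsum : c + (a - c) = a := by abel
    rw [← hsum, norm_add_sq_real, hsum]
  rw [hexp, horth]
  ring

theorem projC_tendsto [CompleteSpace E] (K : ℕ → Submodule ℝ E)
    (hc : ∀ n, IsComplete ((K n : Set E))) (hmono : ∀ i j, i ≤ j → K j ≤ K i) (f : E) :
    ∃ g : E, (∀ n, g ∈ K n) ∧ Tendsto (fun n => projC (K n) (hc n) f) atTop (𝓝 g) := by
  set p : ℕ → E := fun n => projC (K n) (hc n) f with hp
  set a : ℕ → ℝ := fun n => ‖p n‖ ^ 2 with ha
  have hpyth : ∀ i j, i ≤ j → a i = a j + ‖p i - p j‖ ^ 2 := fun i j hij =>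
    projC_pyth (hc i) (hc j) (hmono i j hij) f
  have hanti : Antitone a := fun i j hij => by
    have := hpyth i j hij
    nlinarith [sq_nonneg ‖p i - p j‖]
  have hbdd : BddBelow (Set.range a) := ⟨0, by rintro x ⟨n, rfl⟩; exact sq_nonneg _⟩
  set L : ℝ := ⨅ n, a n with hL
  have hconv : Tendsto a atTop (𝓝 L) := tendsto_atTop_ciInf hanti hbdd
  have hLle : ∀ n, L ≤ a n := fun n => ciInf_le hbdd n
  have hdist : ∀ n mm N : ℕ, N ≤ n → N ≤ mm → dist (p n) (p mm) ≤ Real.sqrt (a N - L) := by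
    have key : ∀ n mm : ℕ, n ≤ mm → ‖p n - p mm‖ ^ 2 = a n - a mm := fun n mm h => by
      have := hpyth n mm h; linarith
    intro n mm N hNn hNm
    rcases le_total n mm with h | h
    · rw [dist_eq_norm, ← Real.sqrt_sq (norm_nonneg (p n - p mm)), key n mm h]
      exact Real.sqrt_le_sqrt (by have := hanti hNn; have := hLle mm; linarith)
    · rw [dist_comm, dist_eq_norm, ← Real.sqrt_sq (norm_nonneg (p mm - p n)), key mm n h]
      exact Real.sqrt_le_sqrt (by have := hanti hNm; have := hLle n; linarith)
  have htend0 : Tendsto (fun N => Real.sqrt (a N - L)) atTop (𝓝 0) := by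
    have h1 : Tendsto (fun N => a N - L) atTop (𝓝 (L - L)) := hconv.sub tendsto_const_nhds
    rw [sub_self] at h1
    have := (Real.continuous_sqrt.tendsto 0).comp h1
    rwa [Real.sqrt_zero] at this
  have hcauchy : CauchySeq p := cauchySeq_of_le_tendsto_0 _ hdist htend0
  obtain ⟨g, hg⟩ := cauchySeq_tendsto_of_complete hcauchy
  refine ⟨g, fun n => ?_, hg⟩
  refine (hc n).isClosed.mem_of_tendsto hg (eventually_atTop.mpr ⟨n, fun j hj => ?_⟩)
  exact hmono n j hj (projC_mem _ _ _)

end Hilbert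

section Trivial

variable {X : Type*} [MeasurableSpace X] {m : Measure X} [IsProbabilityMeasure m]

theorem ae_const_of_tail_trivial (𝒢 : ℕ → MeasurableSpace X)
    (hmono : ∀ i j, i ≤ j → 𝒢 j ≤ 𝒢 i) (hle : ∀ n, 𝒢 n ≤ ‹MeasurableSpace X›)
    (htriv : ∀ A : Set X, (∀ n, MeasurableSet[𝒢 n] A) → m A = 0 ∨ m A = 1)
    (gn : ℕ → X → ℝ) (hgn : ∀ n, StronglyMeasurable[𝒢 n] (gn n))
    (hae : ∀ n, gn n =ᵐ[m] gn 0) :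
    ∃ c : ℝ, gn 0 =ᵐ[m] fun _ => c := by
  have hmeas0 : Measurable (gn 0) := ((hgn 0).measurable).mono (hle 0) le_rfl
  -- the tail sets
  set A : ℚ → Set X := fun q => ⋂ N, ⋃ k, ⋃ (_ : N ≤ k), {x | (q : ℝ) < gn k x} with hA
  have hAmeas : ∀ (q : ℚ) (j : ℕ), MeasurableSet[𝒢 j] (A q) := by
    intro q j
    have hrw : A q = ⋂ N, ⋃ k, ⋃ (_ : N + j ≤ k), {x | (q : ℝ) < gn k x} := by
      ext x
      simp only [hA, Set.mem_iInter, Set.mem_iUnion, Set.mem_setOf_eq]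
      constructor
      · intro hx N
        obtain ⟨k, hk, hkx⟩ := hx (N + j)
        exact ⟨k, hk, hkx⟩
      · intro hx N
        obtain ⟨k, hk, hkx⟩ := hx N
        exact ⟨k, by omega, hkx⟩
    rw [hrw]
    refine MeasurableSet.iInter fun N => MeasurableSet.iUnion fun k =>
      MeasurableSet.iUnion fun hk => ?_
    have : MeasurableSet[𝒢 k] {x | (q : ℝ) < gn k x} :=
      (hgn k).measurable measurableSet_Ioi
    exact hmono j k (by omega) _ this
  have hE : ∀ᵐ x ∂m, ∀ n, gn n x = gn 0 x := ae_all_iff.mpr hae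
  have hAae : ∀ q : ℚ, A q =ᵐ[m] {x | (q : ℝ) < gn 0 x} := by
    intro q
    rw [Filter.eventuallyEq_set]
    filter_upwards [hE] with x hx
    simp only [hA, Set.mem_iInter, Set.mem_iUnion, Set.mem_setOf_eq]
    constructor
    · intro h
      obtain ⟨k, _, hkx⟩ := h 0
      rwa [hx k] at hkx
    · intro h N
      exact ⟨N, le_rfl, by rwa [hx N]⟩
  have hdich : ∀ q : ℚ, m {x | (q : ℝ) < gn 0 x} = 0 ∨ m {x | (q : ℝ) < gn 0 x} = 1 := by
    intro q
    rw [← measure_congr (hAae q)]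
    exact htriv (A q) (hAmeas q)
  set B : ℚ → Set X := fun q => {x | (q : ℝ) < gn 0 x} with hB
  have hBmeas : ∀ q : ℚ, MeasurableSet (B q) := fun q => hmeas0 measurableSet_Ioi
  have hBanti : ∀ q q' : ℚ, q ≤ q' → B q' ⊆ B q := by
    intro q q' hqq' x hx
    simp only [hB, Set.mem_setOf_eq] at hx ⊢
    exact lt_of_le_of_lt (by exact_mod_cast hqq') hx
  -- not all measures are 1
  have hnot1 : ∃ q : ℚ, m (B q) = 0 := by
    by_contra hcon
    push_neg at hcon
    have hone : ∀ q : ℚ, m (B q) = 1 := fun q => (hdich q).resolve_left (hcon q)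
    have hiempty : ⋂ n : ℕ, B (n : ℚ) = ∅ := by
      ext x
      simp only [Set.mem_iInter, Set.mem_empty_iff_false, iff_false, not_forall, hB,
        Set.mem_setOf_eq, not_lt]
      obtain ⟨n, hn⟩ := exists_nat_gt (gn 0 x)
      exact ⟨n, by push_cast; exact hn.le⟩
    have := tendsto_measure_iInter_atTop (μ := m) (s := fun n : ℕ => B (n : ℚ))
      (fun n => (hBmeas _).nullMeasurableSet)
      (fun i j hij => hBanti _ _ (by exact_mod_cast hij)) ⟨0, measure_ne_top m _⟩
    rw [hiempty] at this
    simp only [measure_empty] at this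
    have h1 : Tendsto (fun n : ℕ => m (B (n : ℚ))) atTop (𝓝 1) := by
      simp only [hone]; exact tendsto_const_nhds
    have := tendsto_nhds_unique this h1
    simp at this
  -- not all measures are 0
  have hnot0 : ∃ q : ℚ, m (B q) = 1 := by
    by_contra hcon
    push_neg at hcon
    have hzero : ∀ q : ℚ, m (B q) = 0 := fun q => (hdich q).resolve_right (hcon q)
    have hcompl : ∀ n : ℕ, m ((B (-(n : ℚ)))ᶜ) = 1 := by
      intro n
      rw [measure_compl (hBmeas _) (measure_ne_top m _), hzero, measure_univ]
      simp
    have hiempty : ⋂ n : ℕ, (B (-(n : ℚ)))ᶜ = ∅ := by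
      ext x
      simp only [Set.mem_iInter, Set.mem_compl_iff, Set.mem_empty_iff_false, iff_false,
        not_forall, not_not, hB, Set.mem_setOf_eq]
      obtain ⟨n, hn⟩ := exists_nat_gt (-(gn 0 x))
      exact ⟨n, by push_cast; linarith⟩
    have := tendsto_measure_iInter_atTop (μ := m) (s := fun n : ℕ => (B (-(n : ℚ)))ᶜ)
      (fun n => (hBmeas _).compl.nullMeasurableSet)
      (fun i j hij => Set.compl_subset_compl.mpr (hBanti _ _ (neg_le_neg (by exact_mod_cast hij))))
      ⟨0, measure_ne_top m _⟩
    rw [hiempty] at this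
    simp only [measure_empty] at this
    have h1 : Tendsto (fun n : ℕ => m ((B (-(n : ℚ)))ᶜ)) atTop (𝓝 1) := by
      simp only [hcompl]; exact tendsto_const_nhds
    have := tendsto_nhds_unique this h1
    simp at this
  obtain ⟨q₀, hq₀⟩ := hnot1
  set S : Set ℚ := {q : ℚ | m (B q) = 1} with hS
  have hSne : S.Nonempty := hnot0
  have hSbd : ∀ q ∈ S, (q : ℝ) ≤ (q₀ : ℝ) := by
    intro q hq
    by_contra hlt
    push_neg at hlt
    have hsub : B q ⊆ B q₀ := hBanti _ _ (by exact_mod_cast hlt.le)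
    have hmm := measure_mono (μ := m) hsub
    rw [(hq : m (B q) = 1), hq₀] at hmm
    simp at hmm
  have hSbdd : BddAbove ((fun q : ℚ => (q : ℝ)) '' S) := ⟨(q₀ : ℝ), by
    rintro x ⟨q, hq, rfl⟩; exact hSbd q hq⟩
  have hSimne : ((fun q : ℚ => (q : ℝ)) '' S).Nonempty := hSne.image _
  set c : ℝ := sSup ((fun q : ℚ => (q : ℝ)) '' S) with hc
  have claim1 : ∀ q : ℚ, c < (q : ℝ) → m (B q) = 0 := by
    intro q hq
    rcases hdich q with h | h
    · exact h
    · exact absurd (le_csSup hSbdd ⟨q, h, rfl⟩) (not_le.mpr hq)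
  have claim2 : ∀ q : ℚ, (q : ℝ) < c → m {x | gn 0 x ≤ (q : ℝ)} = 0 := by
    intro q hq
    obtain ⟨y, ⟨q', hq', rfl⟩, hqy⟩ := exists_lt_of_lt_csSup hSimne hq
    have hsub : {x | gn 0 x ≤ (q : ℝ)} ⊆ (B q')ᶜ := by
      intro x hx
      simp only [Set.mem_compl_iff, hB, Set.mem_setOf_eq, not_lt] at hx ⊢
      exact le_trans hx hqy.le
    refine measure_mono_null hsub ?_
    rw [measure_compl (hBmeas _) (measure_ne_top m _), hq', measure_univ]
    simp
  have hgt0 : m {x | c < gn 0 x} = 0 := by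
    have hsub : {x | c < gn 0 x} ⊆ ⋃ q : ℚ, {x | c < (q : ℝ) ∧ (q : ℝ) < gn 0 x} := by
      intro x hx
      obtain ⟨q, hq1, hq2⟩ := exists_rat_btwn (show c < gn 0 x from hx)
      exact Set.mem_iUnion.mpr ⟨q, hq1, hq2⟩
    refine measure_mono_null hsub (measure_iUnion_null fun q => ?_)
    by_cases hcq : c < (q : ℝ)
    · refine measure_mono_null (fun x hx => ?_) (claim1 q hcq)
      exact hx.2
    · refine measure_mono_null (fun x hx => absurd hx.1 hcq) (measure_empty (μ := m))
  have hlt0 : m {x | gn 0 x < c} = 0 := by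
    have hsub : {x | gn 0 x < c} ⊆ ⋃ q : ℚ, {x | gn 0 x ≤ (q : ℝ) ∧ (q : ℝ) < c} := by
      intro x hx
      obtain ⟨q, hq1, hq2⟩ := exists_rat_btwn (show gn 0 x < c from hx)
      exact Set.mem_iUnion.mpr ⟨q, hq1.le, hq2⟩
    refine measure_mono_null hsub (measure_iUnion_null fun q => ?_)
    by_cases hcq : (q : ℝ) < c
    · refine measure_mono_null (fun x hx => hx.1) (claim2 q hcq)
    · refine measure_mono_null (fun x hx => absurd hx.2 hcq) (measure_empty (μ := m))
  refine ⟨c, ?_⟩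
  have : m {x | gn 0 x ≠ c} = 0 := by
    refine measure_mono_null (fun x hx => ?_) (measure_union_null hgt0 hlt0)
    rcases lt_or_gt_of_ne (hx : gn 0 x ≠ c) with h | h
    · exact Or.inr h
    · exact Or.inl h
  exact ae_iff.mpr this

end Trivial

section Density

variable {X : Type*} [MeasurableSpace X] {m : Measure X} [IsProbabilityMeasure m]

lemma exists_L2_approx (f : Lp ℝ 1 m) (hf : ∫ x, f x ∂m = 0) {ε : ℝ} (hε : 0 < ε) :
    ∃ φ : Lp ℝ 1 m, MemLp (φ : X → ℝ) 2 m ∧ (∫ x, φ x ∂m) = 0 ∧ ‖f - φ‖ < ε := by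
  haveI : Fact ((1:ℝ≥0∞) ≤ 1) := ⟨le_rfl⟩
  obtain ⟨s, hs⟩ := (Lp.simpleFunc.denseRange (p := 1) (μ := m) (E := ℝ)
    ENNReal.one_ne_top).exists_dist_lt f (by positivity : (0:ℝ) < ε/3)
  set sf : Lp ℝ 1 m := (s : Lp ℝ 1 m) with hsf
  have hdist : ‖f - sf‖ < ε/3 := by rwa [← dist_eq_norm]
  -- simple functions are in L²
  have hmem2 : MemLp (sf : X → ℝ) 2 m := by
    obtain ⟨C, hC⟩ := (Lp.simpleFunc.toSimpleFunc s).exists_forall_norm_le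
    have hb : ∀ᵐ x ∂m, ‖(sf : X → ℝ) x‖ ≤ C := by
      filter_upwards [Lp.simpleFunc.toSimpleFunc_eq_toFun s] with x hx
      rw [← hx]; exact hC x
    exact (memLp_top_of_bound (Lp.aestronglyMeasurable sf) C hb).mono_exponent le_top
  set c : ℝ := ∫ x, sf x ∂m with hcdef
  set one₁ : Lp ℝ 1 m := (memLp_const (1:ℝ)).toLp _ with hone₁
  have honecoe : (one₁ : X → ℝ) =ᵐ[m] fun _ => (1:ℝ) := MemLp.coeFn_toLp _
  set φ : Lp ℝ 1 m := sf - c • one₁ with hφ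
  have hφcoe : (φ : X → ℝ) =ᵐ[m] fun x => (sf : X → ℝ) x - c := by
    filter_upwards [Lp.coeFn_sub sf (c • one₁), Lp.coeFn_smul c one₁, honecoe] with x h1 h2 h3
    show (φ : X → ℝ) x = _
    rw [hφ, h1]
    simp only [Pi.sub_apply]
    rw [h2]
    simp only [Pi.smul_apply, smul_eq_mul, h3, mul_one]
  refine ⟨φ, ?_, ?_, ?_⟩
  · exact (hmem2.sub (memLp_const c)).ae_eq hφcoe.symm
  · rw [integral_congr_ae hφcoe, integral_sub (L1.integrable_coeFn sf) (integrable_const c)]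
    simp [← hcdef, measure_univ]
  · have hc_small : |c| ≤ ‖sf - f‖ := by
      have h1 : c = ∫ x, ((sf : X → ℝ) x - (f : X → ℝ) x) ∂m := by
        rw [integral_sub (L1.integrable_coeFn sf) (L1.integrable_coeFn f), hf, sub_zero, hcdef]
      have h2 : ‖sf - f‖ = ∫ x, ‖(sf : X → ℝ) x - (f : X → ℝ) x‖ ∂m := by
        rw [L1.norm_eq_integral_norm]
        refine integral_congr_ae ?_
        filter_upwards [Lp.coeFn_sub sf f] with x hx
        rw [hx]; rfl
      rw [h1, h2, ← Real.norm_eq_abs]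
      exact norm_integral_le_integral_norm _
    have hnorm_one : ‖one₁‖ = 1 := by
      rw [L1.norm_eq_integral_norm]
      rw [integral_congr_ae (g := fun _ => (1:ℝ))
        (by filter_upwards [honecoe] with x hx; rw [hx]; simp)]
      simp [measure_univ]
    have hdecomp : f - φ = (f - sf) + c • one₁ := by rw [hφ]; abel
    have : ‖f - φ‖ ≤ ‖f - sf‖ + ‖c • one₁‖ := by rw [hdecomp]; exact norm_add_le _ _
    have h3 : ‖c • one₁‖ = |c| := by rw [norm_smul, hnorm_one, mul_one, Real.norm_eq_abs]
    have h4 : ‖sf - f‖ = ‖f - sf‖ := norm_sub_rev _ _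
    rw [h4] at hc_small
    calc ‖f - φ‖ ≤ ‖f - sf‖ + |c| := by rw [← h3]; exact this
      _ < ε := by linarith

end Density

section Main

open scoped RealInnerProductSpace

variable {X : Type*} [MeasurableSpace X] {m : Measure X} [IsProbabilityMeasure m]
variable {Ω : Type*} {σ : Ω → Ω} {T : Ω → X → X}

/-- The `n`-th tail σ-algebra along the orbit of `ω`. -/
noncomputable def tailG (T : Ω → X → X) (σ : Ω → Ω) [MeasurableSpace X] (n : ℕ) (ω : Ω) :
    MeasurableSpace X :=
  MeasurableSpace.comap (mapCoc T σ (n+1) ω) inferInstance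

/-- The corresponding subspace of `L²`. -/
noncomputable def tailK (T : Ω → X → X) (σ : Ω → Ω) [MeasurableSpace X] (m : Measure X)
    (n : ℕ) (ω : Ω) : Submodule ℝ (Lp ℝ 2 m) :=
  lpMeas ℝ ℝ (tailG T σ n ω) 2 m

lemma tailG_le (hT : ∀ ω, Measurable (T ω)) (ω : Ω) :
    ∀ n, tailG T σ n ω ≤ ‹MeasurableSpace X› := fun n =>
  measurable_iff_comap_le.mp (mapCoc_meas (σ := σ) hT (n+1) ω)

lemma tailG_mono (hT : ∀ ω, Measurable (T ω)) (ω : Ω) :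
    ∀ i j, i ≤ j → tailG T σ j ω ≤ tailG T σ i ω := by
  intro i j hij
  have hd : mapCoc T σ (j+1) ω
      = mapCoc T σ (j - i) (σ^[i+1] ω) ∘ mapCoc T σ (i+1) ω := by
    have := mapCoc_add (σ := σ) (T := T) (j - i) (i + 1) ω
    rw [show j - i + (i + 1) = j + 1 by omega] at this
    exact this
  rw [tailG, tailG, hd, ← MeasurableSpace.comap_comp]
  exact MeasurableSpace.comap_mono
    (measurable_iff_comap_le.mp (mapCoc_meas (σ := σ) hT _ _))

lemma tailK_complete (hT : ∀ ω, Measurable (T ω)) (n : ℕ) (ω : Ω) :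
    IsComplete ((tailK T σ m n ω : Submodule ℝ (Lp ℝ 2 m)) : Set (Lp ℝ 2 m)) :=
  isComplete_aestronglyMeasurable (tailG_le hT ω n)

lemma tailK_mono (hT : ∀ ω, Measurable (T ω)) (ω : Ω) :
    ∀ i j, i ≤ j → tailK T σ m j ω ≤ tailK T σ m i ω := by
  intro i j hij u hu
  rw [tailK, mem_lpMeas_iff_aestronglyMeasurable] at hu ⊢
  exact hu.mono (tailG_mono hT ω i j hij)

lemma norm_coc_succ_le (hT : ∀ ω, Measurable (T ω)) (hns : ∀ ω, Measure.map (T ω) m ≪ m)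
    (P : Ω → Module.End ℝ (Lp ℝ 1 m))
    (hPF : ∀ (ω : Ω) (f : Lp ℝ 1 m) (g : Lp ℝ ⊤ m),
      ∫ x, (P ω f) x * g x ∂m = ∫ x, f x * g (T ω x) ∂m)
    (n : ℕ) (ω : Ω) (f : Lp ℝ 1 m) (f₂ : Lp ℝ 2 m)
    (hff₂ : (f₂ : X → ℝ) =ᵐ[m] (f : X → ℝ)) :
    ‖coc P σ (n+1) ω f‖ ≤ ‖projC (tailK T σ m n ω) (tailK_complete hT n ω) f₂‖ := by
  set u : Lp ℝ 1 m := coc P σ (n+1) ω f with hu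
  set S : X → X := mapCoc T σ (n+1) ω with hS
  have hSmeas : Measurable S := mapCoc_meas (σ := σ) hT (n+1) ω
  have hSqmp : Measure.QuasiMeasurePreserving S m m := mapCoc_qmp (σ := σ) hT hns (n+1) ω
  set w : X → ℝ := (Lp.aestronglyMeasurable u).mk _ with hw
  have hwsm : StronglyMeasurable w := (Lp.aestronglyMeasurable u).stronglyMeasurable_mk
  have hwae : (u : X → ℝ) =ᵐ[m] w := (Lp.aestronglyMeasurable u).ae_eq_mk
  set y : X → ℝ := fun x =>
    Set.indicator {z | 0 < w z} (fun _ => (1:ℝ)) x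
      - Set.indicator {z | w z < 0} (fun _ => (1:ℝ)) x with hy
  have hymeas : Measurable y :=
    (measurable_const.indicator (hwsm.measurable measurableSet_Ioi)).sub
      (measurable_const.indicator (hwsm.measurable measurableSet_Iio))
  have hybd : ∀ x, ‖y x‖ ≤ 1 := by
    intro x
    rw [hy, Real.norm_eq_abs]
    simp only [Set.indicator_apply, Set.mem_setOf_eq]
    split_ifs <;> norm_num
  have hyu : ∀ᵐ x ∂m, (u : X → ℝ) x * y x = ‖(u : X → ℝ) x‖ := by
    filter_upwards [hwae] with x hx
    rw [hx, Real.norm_eq_abs, hy]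
    simp only [Set.indicator_apply, Set.mem_setOf_eq]
    rcases lt_trichotomy (w x) 0 with h | h | h
    · rw [if_neg (by linarith), if_pos h, abs_of_neg h]; ring
    · simp [h]
    · rw [if_pos h, if_neg (by linarith), abs_of_pos h]; ring
  set gy : Lp ℝ ⊤ m :=
    (memLp_top_of_bound hymeas.aestronglyMeasurable 1 (ae_of_all _ hybd)).toLp y with hgydef
  have hgyae : (gy : X → ℝ) =ᵐ[m] y := MemLp.coeFn_toLp _
  set k₀ : X → ℝ := y ∘ S with hk₀
  have hk₀meas : Measurable k₀ := hymeas.comp hSmeas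
  have hk₀bd : ∀ x, ‖k₀ x‖ ≤ 1 := fun x => hybd (S x)
  have hk₀mem : MemLp k₀ 2 m :=
    (memLp_top_of_bound hk₀meas.aestronglyMeasurable 1
      (ae_of_all _ hk₀bd)).mono_exponent le_top
  set k₂ : Lp ℝ 2 m := hk₀mem.toLp k₀ with hk₂def
  have hk₂ae : (k₂ : X → ℝ) =ᵐ[m] k₀ := MemLp.coeFn_toLp _
  have hk₂mem : k₂ ∈ tailK T σ m n ω := by
    rw [tailK, mem_lpMeas_iff_aestronglyMeasurable]
    refine AEStronglyMeasurable.congr ?_ hk₂ae.symm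
    refine ⟨k₀, ?_, Filter.EventuallyEq.rfl⟩
    have hmS : Measurable[tailG T σ n ω] S := measurable_iff_comap_le.mpr le_rfl
    exact (hymeas.comp hmS).stronglyMeasurable
  have hk₂norm : ‖k₂‖ ≤ 1 := by
    have h := Lp.norm_le_of_ae_bound (μ := m) (f := k₂) zero_le_one
      (by filter_upwards [hk₂ae] with x hx; rw [hx]; exact hk₀bd x)
    simpa [measureUnivNNReal, measure_univ] using h
  have e1 : ‖u‖ = ∫ x, (u : X → ℝ) x * (gy : X → ℝ) x ∂m := by
    rw [L1.norm_eq_integral_norm]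
    refine (integral_congr_ae ?_).symm
    filter_upwards [hgyae, hyu] with x h1 h2
    rw [h1, h2]
  have e2 : ∫ x, (u : X → ℝ) x * (gy : X → ℝ) x ∂m
      = ∫ x, (f : X → ℝ) x * (gy : X → ℝ) (S x) ∂m :=
    key_int hT hns P hPF (n+1) ω f gy
  have e3 : ∫ x, (f : X → ℝ) x * (gy : X → ℝ) (S x) ∂m
      = ∫ x, (f₂ : X → ℝ) x * (k₂ : X → ℝ) x ∂m := by
    refine integral_congr_ae ?_
    have hcomp : ((gy : X → ℝ) ∘ S) =ᵐ[m] (y ∘ S) := hSqmp.ae_eq_comp hgyae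
    filter_upwards [hcomp, hff₂, hk₂ae] with x h1 h2 h3
    have h1' : (gy : X → ℝ) (S x) = y (S x) := h1
    rw [h1', h2, h3]
    rfl
  have e4 : ∫ x, (f₂ : X → ℝ) x * (k₂ : X → ℝ) x ∂m = ⟪f₂, k₂⟫ := by
    rw [L2.inner_def]
    refine integral_congr_ae (ae_of_all _ fun x => ?_)
    simp [RCLike.inner_apply, starRingEnd_apply]
    ring
  have e5 : ⟪f₂, k₂⟫ = ⟪projC (tailK T σ m n ω) (tailK_complete hT n ω) f₂, k₂⟫ :=
    (inner_projC _ _ f₂ k₂ hk₂mem).symm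
  have e6 : ⟪projC (tailK T σ m n ω) (tailK_complete hT n ω) f₂, k₂⟫
      ≤ ‖projC (tailK T σ m n ω) (tailK_complete hT n ω) f₂‖ * ‖k₂‖ :=
    real_inner_le_norm _ _
  calc ‖u‖ = ∫ x, (u : X → ℝ) x * (gy : X → ℝ) x ∂m := e1
    _ = ⟪projC (tailK T σ m n ω) (tailK_complete hT n ω) f₂, k₂⟫ := by rw [e2, e3, e4, e5]
    _ ≤ ‖projC (tailK T σ m n ω) (tailK_complete hT n ω) f₂‖ * ‖k₂‖ := e6
    _ ≤ ‖projC (tailK T σ m n ω) (tailK_complete hT n ω) f₂‖ * 1 :=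
        mul_le_mul_of_nonneg_left hk₂norm (norm_nonneg _)
    _ = ‖projC (tailK T σ m n ω) (tailK_complete hT n ω) f₂‖ := mul_one _

end Main

section Directions

open scoped RealInnerProductSpace

variable {X : Type*} [MeasurableSpace X] {m : Measure X} [IsProbabilityMeasure m]
variable {Ω : Type*} {σ : Ω → Ω} {T : Ω → X → X}

lemma exact_of_trivial (hT : ∀ ω, Measurable (T ω)) (hns : ∀ ω, Measure.map (T ω) m ≪ m)
    (P : Ω → Module.End ℝ (Lp ℝ 1 m))
    (hP : ∀ ω, (∀ f : Lp ℝ 1 m, 0 ≤ f → 0 ≤ P ω f) ∧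
      ∀ f : Lp ℝ 1 m, ∫ x, (P ω f) x ∂m = ∫ x, f x ∂m)
    (hPF : ∀ (ω : Ω) (f : Lp ℝ 1 m) (g : Lp ℝ ⊤ m),
      ∫ x, (P ω f) x * g x ∂m = ∫ x, f x * g (T ω x) ∂m)
    (ω : Ω)
    (htriv : ∀ A : Set X, (∀ n : ℕ, ∃ B : Set X, MeasurableSet B ∧
      mapCoc T σ (n + 1) ω ⁻¹' B = A) → m A = 0 ∨ m A = 1) :
    ∀ f : Lp ℝ 1 m, ∫ x, f x ∂m = 0 →
      Tendsto (fun n => ‖coc P σ n ω f‖) atTop (𝓝 0) := by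
  intro f hf
  rw [Metric.tendsto_atTop]
  intro ε hε
  obtain ⟨φ, hφ2, hφ0, hφclose⟩ := exists_L2_approx f hf (by positivity : (0:ℝ) < ε/3)
  set φ₂ : Lp ℝ 2 m := hφ2.toLp _ with hφ₂def
  have hφ₂ae : (φ₂ : X → ℝ) =ᵐ[m] (φ : X → ℝ) := MemLp.coeFn_toLp _
  obtain ⟨g, hgK, hgt⟩ := projC_tendsto (fun n => tailK T σ m n ω)
    (fun n => tailK_complete hT n ω) (tailK_mono hT ω) φ₂
  -- `g` is a.e. constant by tail triviality
  have hchoice : ∀ nn : ℕ, AEStronglyMeasurable[tailG T σ nn ω] (g : X → ℝ) m := fun nn =>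
    mem_lpMeas_iff_aestronglyMeasurable.mp (hgK nn)
  set gn : ℕ → X → ℝ := fun nn => (hchoice nn).choose with hgn
  have hgnsm : ∀ nn, StronglyMeasurable[tailG T σ nn ω] (gn nn) := fun nn =>
    (hchoice nn).choose_spec.1
  have hgnae : ∀ nn, (g : X → ℝ) =ᵐ[m] gn nn := fun nn => (hchoice nn).choose_spec.2
  have hae0 : ∀ nn, gn nn =ᵐ[m] gn 0 := fun nn => (hgnae nn).symm.trans (hgnae 0)
  have htriv' : ∀ A : Set X, (∀ nn, MeasurableSet[tailG T σ nn ω] A) → m A = 0 ∨ m A = 1 := by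
    intro A hA
    exact htriv A fun nn => hA nn
  obtain ⟨c, hc⟩ := ae_const_of_tail_trivial (fun nn => tailG T σ nn ω)
    (tailG_mono hT ω) (tailG_le hT ω) htriv' gn hgnsm hae0
  have hgc : (g : X → ℝ) =ᵐ[m] fun _ => c := (hgnae 0).trans hc
  -- the constant is zero
  set one₂ : Lp ℝ 2 m := (memLp_const (1:ℝ)).toLp _ with hone₂def
  have hone₂ae : (one₂ : X → ℝ) =ᵐ[m] fun _ => (1:ℝ) := MemLp.coeFn_toLp _
  have hone₂mem : ∀ nn, one₂ ∈ tailK T σ m nn ω := fun nn =>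
    mem_lpMeas_iff_aestronglyMeasurable.mpr ⟨fun _ => 1, stronglyMeasurable_const, hone₂ae⟩
  have hproj_one : ∀ nn : ℕ,
      ⟪projC (tailK T σ m nn ω) (tailK_complete hT nn ω) φ₂, one₂⟫ = ⟪φ₂, one₂⟫ := fun nn =>
    inner_projC _ _ _ _ (hone₂mem nn)
  have hgone : ⟪g, one₂⟫ = ⟪φ₂, one₂⟫ := by
    have h1 : Tendsto (fun nn => ⟪projC (tailK T σ m nn ω) (tailK_complete hT nn ω) φ₂, one₂⟫)
        atTop (𝓝 ⟪g, one₂⟫) := hgt.inner tendsto_const_nhds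
    rw [funext hproj_one] at h1
    exact tendsto_nhds_unique h1 tendsto_const_nhds
  have hint_g : ⟪g, one₂⟫ = c := by
    rw [L2.inner_def, integral_congr_ae (g := fun _ => c)
      (by filter_upwards [hgc, hone₂ae] with x h1 h2;
          simp [RCLike.inner_apply, starRingEnd_apply, h1, h2])]
    simp [measure_univ]
  have hint_φ : ⟪φ₂, one₂⟫ = 0 := by
    rw [L2.inner_def, integral_congr_ae (g := fun x => (φ : X → ℝ) x)
      (by filter_upwards [hφ₂ae, hone₂ae] with x h1 h2;
          simp [RCLike.inner_apply, starRingEnd_apply, h1, h2])]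
    exact hφ0
  have hc0 : c = 0 := by rw [← hint_g, hgone, hint_φ]
  have hg0 : g = 0 := by
    rw [Lp.eq_zero_iff_ae_eq_zero]
    filter_upwards [hgc] with x hx
    rw [hx, hc0]
    rfl
  have hnorm0 : Tendsto (fun nn => ‖projC (tailK T σ m nn ω) (tailK_complete hT nn ω) φ₂‖)
      atTop (𝓝 0) := by
    have h := hgt.norm
    rwa [hg0, norm_zero] at h
  obtain ⟨N, hN⟩ := Metric.tendsto_atTop.mp hnorm0 (ε/3) (by positivity)
  refine ⟨N + 1, fun n hn => ?_⟩
  obtain ⟨k, rfl⟩ : ∃ k, n = k + 1 := ⟨n - 1, by omega⟩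
  have hk : N ≤ k := by omega
  have hproj_small : ‖projC (tailK T σ m k ω) (tailK_complete hT k ω) φ₂‖ < ε/3 := by
    have h := hN k hk
    rwa [Real.dist_0_eq_abs, abs_of_nonneg (norm_nonneg _)] at h
  have hsplit : coc P σ (k+1) ω f = coc P σ (k+1) ω (f - φ) + coc P σ (k+1) ω φ := by
    rw [map_sub]; abel
  have hb1 : ‖coc P σ (k+1) ω (f - φ)‖ ≤ ‖f - φ‖ := coc_norm_le P hP (k+1) ω _
  have hb2 : ‖coc P σ (k+1) ω φ‖ ≤ ‖projC (tailK T σ m k ω) (tailK_complete hT k ω) φ₂‖ :=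
    norm_coc_succ_le hT hns P hPF k ω φ φ₂ hφ₂ae
  have htri : ‖coc P σ (k+1) ω f‖ ≤ ‖coc P σ (k+1) ω (f - φ)‖ + ‖coc P σ (k+1) ω φ‖ := by
    rw [hsplit]; exact norm_add_le _ _
  rw [Real.dist_0_eq_abs, abs_of_nonneg (norm_nonneg _)]
  linarith

lemma trivial_of_exact (hT : ∀ ω, Measurable (T ω)) (hns : ∀ ω, Measure.map (T ω) m ≪ m)
    (P : Ω → Module.End ℝ (Lp ℝ 1 m))
    (hPF : ∀ (ω : Ω) (f : Lp ℝ 1 m) (g : Lp ℝ ⊤ m),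
      ∫ x, (P ω f) x * g x ∂m = ∫ x, f x * g (T ω x) ∂m)
    (ω : Ω)
    (hexact : ∀ f : Lp ℝ 1 m, ∫ x, f x ∂m = 0 →
      Tendsto (fun n => ‖coc P σ n ω f‖) atTop (𝓝 0)) :
    ∀ A : Set X, (∀ n : ℕ, ∃ B : Set X, MeasurableSet B ∧
      mapCoc T σ (n + 1) ω ⁻¹' B = A) → m A = 0 ∨ m A = 1 := by
  intro A hA
  have hAmeas : MeasurableSet A := by
    obtain ⟨B, hB, hBA⟩ := hA 0
    rw [← hBA]
    exact mapCoc_meas (σ := σ) hT 1 ω hB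
  set a : ℝ := (m A).toReal with ha
  have ha0 : 0 ≤ a := ENNReal.toReal_nonneg
  have ha1 : a ≤ 1 := by
    rw [ha]
    exact ENNReal.toReal_le_of_le_ofReal zero_le_one (by simpa using prob_le_one (μ := m) (s := A))
  have hfin : Integrable (fun x => Set.indicator A (fun _ => (1:ℝ)) x - a) m :=
    ((integrable_const (1:ℝ)).indicator hAmeas).sub (integrable_const a)
  set f : Lp ℝ 1 m := (memLp_one_iff_integrable.mpr hfin).toLp _ with hfdef
  have hfae : (f : X → ℝ) =ᵐ[m] fun x => Set.indicator A (fun _ => (1:ℝ)) x - a :=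
    MemLp.coeFn_toLp _
  have hf0 : ∫ x, f x ∂m = 0 := by
    rw [integral_congr_ae hfae,
      integral_sub ((integrable_const (1:ℝ)).indicator hAmeas) (integrable_const a),
      integral_indicator_const (1:ℝ) hAmeas]
    simp [measure_univ, ha, measureReal_def]
  have hlow : ∀ n : ℕ, a * (1 - a) ≤ ‖coc P σ (n+1) ω f‖ := by
    intro n
    obtain ⟨B, hBmeas, hBA⟩ := hA n
    set g : Lp ℝ ⊤ m := (memLp_top_of_bound
      ((measurable_const.indicator hBmeas).aestronglyMeasurable) 1
      (ae_of_all _ fun x => by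
        rw [Real.norm_eq_abs]
        by_cases hx : x ∈ B
        · rw [Set.indicator_of_mem hx]; norm_num
        · rw [Set.indicator_of_notMem hx]; norm_num)).toLp
          (Set.indicator B (fun _ => (1:ℝ))) with hgdef
    have hgae : (g : X → ℝ) =ᵐ[m] Set.indicator B (fun _ => (1:ℝ)) := MemLp.coeFn_toLp _
    have hkey := key_int (σ := σ) hT hns P hPF (n+1) ω f g
    have hrhs : ∫ x, (f : X → ℝ) x * (g : X → ℝ) (mapCoc T σ (n+1) ω x) ∂m = a * (1 - a) := by
      have hcomp : ((g : X → ℝ) ∘ mapCoc T σ (n+1) ω)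
          =ᵐ[m] (Set.indicator B (fun _ => (1:ℝ)) ∘ mapCoc T σ (n+1) ω) :=
        (mapCoc_qmp (σ := σ) hT hns (n+1) ω).ae_eq_comp hgae
      have hptwise : ∀ᵐ x ∂m, (f : X → ℝ) x * (g : X → ℝ) (mapCoc T σ (n+1) ω x)
          = Set.indicator A (fun _ => (1 - a : ℝ)) x := by
        filter_upwards [hcomp, hfae] with x h1 h2
        have h1' : (g : X → ℝ) (mapCoc T σ (n+1) ω x)
            = Set.indicator B (fun _ => (1:ℝ)) (mapCoc T σ (n+1) ω x) := h1
        have hind : Set.indicator B (fun _ => (1:ℝ)) (mapCoc T σ (n+1) ω x)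
            = Set.indicator A (fun _ => (1:ℝ)) x := by
          by_cases hx : x ∈ A
          · rw [Set.indicator_of_mem hx, Set.indicator_of_mem (by rw [← hBA] at hx; exact hx)]
          · rw [Set.indicator_of_notMem hx,
              Set.indicator_of_notMem (by rw [← hBA] at hx; exact hx)]
        rw [h1', hind, h2]
        by_cases hx : x ∈ A
        · rw [Set.indicator_of_mem hx, Set.indicator_of_mem hx]; ring
        · rw [Set.indicator_of_notMem hx, Set.indicator_of_notMem hx]; ring
      rw [integral_congr_ae hptwise, integral_indicator_const _ hAmeas, smul_eq_mul, measureReal_def, ← ha]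
    have habs : a * (1 - a) ≤ |∫ x, ((coc P σ (n+1) ω f : Lp ℝ 1 m) : X → ℝ) x
        * (g : X → ℝ) x ∂m| := by
      rw [hkey, hrhs]
      exact le_abs_self _
    have hbd : |∫ x, ((coc P σ (n+1) ω f : Lp ℝ 1 m) : X → ℝ) x * (g : X → ℝ) x ∂m|
        ≤ ‖coc P σ (n+1) ω f‖ := by
      rw [← Real.norm_eq_abs]
      calc ‖∫ x, ((coc P σ (n+1) ω f : Lp ℝ 1 m) : X → ℝ) x * (g : X → ℝ) x ∂m‖
          ≤ ∫ x, ‖((coc P σ (n+1) ω f : Lp ℝ 1 m) : X → ℝ) x * (g : X → ℝ) x‖ ∂m :=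
            norm_integral_le_integral_norm _
        _ ≤ ∫ x, ‖((coc P σ (n+1) ω f : Lp ℝ 1 m) : X → ℝ) x‖ ∂m := by
            refine integral_mono_ae ?_ (L1.integrable_coeFn _).norm ?_
            · refine (Integrable.mono (L1.integrable_coeFn (coc P σ (n+1) ω f)) ?_ ?_).norm
              · exact ((Lp.aestronglyMeasurable _).mul (Lp.aestronglyMeasurable g))
              · filter_upwards [hgae] with x hx
                rw [norm_mul, hx]
                nth_rewrite 2 [show ‖((coc P σ (n+1) ω f : Lp ℝ 1 m) : X → ℝ) x‖
                  = ‖((coc P σ (n+1) ω f : Lp ℝ 1 m) : X → ℝ) x‖ * 1 from (mul_one _).symm]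
                refine mul_le_mul_of_nonneg_left ?_ (norm_nonneg _)
                by_cases hxB : x ∈ B
                · rw [Set.indicator_of_mem hxB]; norm_num
                · rw [Set.indicator_of_notMem hxB]; norm_num
            · filter_upwards [hgae] with x hx
              rw [norm_mul, hx]
              nth_rewrite 2 [show ‖((coc P σ (n+1) ω f : Lp ℝ 1 m) : X → ℝ) x‖
                = ‖((coc P σ (n+1) ω f : Lp ℝ 1 m) : X → ℝ) x‖ * 1 from (mul_one _).symm]
              refine mul_le_mul_of_nonneg_left ?_ (norm_nonneg _)
              by_cases hxB : x ∈ B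
              · rw [Set.indicator_of_mem hxB]; norm_num
              · rw [Set.indicator_of_notMem hxB]; norm_num
        _ = ‖coc P σ (n+1) ω f‖ := (L1.norm_eq_integral_norm _).symm
    exact habs.trans hbd
  have hlim : Tendsto (fun n => ‖coc P σ (n+1) ω f‖) atTop (𝓝 0) :=
    (hexact f hf0).comp (tendsto_add_atTop_nat 1)
  have hle0 : a * (1 - a) ≤ 0 := ge_of_tendsto' hlim hlow
  have : a = 0 ∨ a = 1 := by
    have hz : a * (1 - a) = 0 := le_antisymm hle0 (mul_nonneg ha0 (by linarith))
    rcases mul_eq_zero.mp hz with h | h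
    · exact Or.inl h
    · exact Or.inr (by linarith)
  rcases this with h | h
  · left
    have := ENNReal.toReal_eq_zero_iff (m A)
    rw [ha] at h
    rcases this.mp h with h' | h'
    · exact h'
    · exact absurd h' (measure_ne_top m A)
  · right
    rw [← ENNReal.toReal_eq_one_iff]
    rw [ha] at h
    exact h

end Directions

/-- Let `(P,σ)` be a Markov operator cocycle induced by Perron–Frobenius
operators of non-singular maps `T_ω` (so `∫ P_ω f · g dm = ∫ f · g∘T_ω dm`).
Then `(P,σ)` is exact iff for a.e. `ω` the tail σ-field
`⋂_{n≥1} (T_ω^n)⁻¹𝒜` is trivial mod `m`. -/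
theorem exact_iff_trivial_tail_field
    {X : Type*} [MeasurableSpace X] (m : Measure X) [IsProbabilityMeasure m]
    {Ω : Type*} [MeasurableSpace Ω] (Pr : Measure Ω) [IsProbabilityMeasure Pr]
    (σ : Ω → Ω) (hσ : MeasurePreserving σ Pr Pr)
    (T : Ω → X → X) (hTmeas : ∀ ω, Measurable (T ω))
    (hns : ∀ ω, Measure.map (T ω) m ≪ m)
    (P : Ω → Module.End ℝ (Lp ℝ 1 m))
    (hP : ∀ ω, (∀ f : Lp ℝ 1 m, 0 ≤ f → 0 ≤ P ω f) ∧
      ∀ f : Lp ℝ 1 m, ∫ x, (P ω f) x ∂m = ∫ x, f x ∂m)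
    (hPF : ∀ (ω : Ω) (f : Lp ℝ 1 m) (g : Lp ℝ ⊤ m),
      ∫ x, (P ω f) x * g x ∂m = ∫ x, f x * g (T ω x) ∂m) :
    (∀ᵐ ω ∂Pr, ∀ f : Lp ℝ 1 m, ∫ x, f x ∂m = 0 →
        Tendsto (fun n => ‖coc P σ n ω f‖) atTop (𝓝 0)) ↔
      (∀ᵐ ω ∂Pr, ∀ A : Set X,
        (∀ n : ℕ, ∃ B : Set X, MeasurableSet B ∧ mapCoc T σ (n + 1) ω ⁻¹' B = A) →
        m A = 0 ∨ m A = 1) := by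
  constructor
  · intro h
    filter_upwards [h] with ω hω
    exact trivial_of_exact hTmeas hns P hPF ω hω
  · intro h
    filter_upwards [h] with ω hω
    exact exact_of_trivial hTmeas hns P hP hPF ω hω
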